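/- arXiv:1506.03404 — 5 statements merged into one kernel-verified Lean document; each statement's English description precedes it below -/
import Mathlib

section
/- Let R be a supertropical semiring and V an arbitrary R-module. Define a binary relation on V by x ≤ y if and only if there exists z ∈ V with x + z = y. Then this relation is a partial order on V; in particular it is antisymmetric: if x + z = y and y + w = x for some z, w ∈ V, then x = y. -/
open scoped Classical

namespace Supertrop

section Defs

variable (R : Type*) [CommSemiring R]

/-- The distinguished element `e = 1 + 1` of a semiring. -/
def eps : R := 1 + 1

/-- `R` is a supertropical semiring: `e` is additively idempotent, and the two
supertropical addition axioms hold. -/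
def IsSupertropical : Prop :=
  eps R + eps R = eps R ∧
    (∀ x y : R, eps R * x ≠ eps R * y → x + y = x ∨ x + y = y) ∧
    (∀ x y : R, eps R * x = eps R * y → x + y = eps R * y)

/-- The ghost ideal `eR`, as a subset of `R`. -/
def eSet : Set R := Set.range (fun a : R => eps R * a)

/-- The tangible elements `𝒯(R) = R \ eR`. -/
def tangible : Set R := {x : R | x ∉ eSet R}

/-- The nonzero ghost elements `𝒢(R) = eR \ {0}`. -/
def ghost : Set R := eSet R \ {0}

end Defs

section Orders

variable {R : Type*} [CommSemiring R]

/-- The minimal ordering on an additive monoid: `x ≤ y` iff `∃ z, x + z = y`. -/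
def mle {M : Type*} [AddCommMonoid M] (x y : M) : Prop := ∃ z, x + z = y

/-- Strict minimal ordering. -/
def mlt {M : Type*} [AddCommMonoid M] (x y : M) : Prop := mle x y ∧ x ≠ y

/-- The (total) ordering of the bipotent semiring `eR`: `u ≤ v ⟺ u + v = v`. -/
def gle (u v : R) : Prop := u + v = v

/-- The strict ordering of `eR`. -/
def glt (u v : R) : Prop := gle u v ∧ u ≠ v

end Orders

section SSF

variable (R : Type*) [CommSemiring R]

/-- `R` is a supersemifield: supertropical, every tangible element is invertible in `R`,
and `𝒢(R)` is a group under multiplication with identity `e`. -/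
def IsSupersemifield : Prop :=
  IsSupertropical R ∧
    (∀ t ∈ tangible R, IsUnit t) ∧
    eps R ∈ ghost R ∧
    (∀ g ∈ ghost R, ∀ h ∈ ghost R, g * h ∈ ghost R) ∧
    (∀ g ∈ ghost R, ∃ h ∈ ghost R, g * h = eps R)

/-- The supersemifield `R` is tangible: `e·𝒯(R) = 𝒢(R)`. -/
def TangibleSSF : Prop := (fun t => eps R * t) '' tangible R = ghost R

/-- Nontriviality: `𝒢(R) ≠ {e}`. -/
def NontrivialG : Prop := ghost R ≠ {eps R}

/-- `R` is discrete: `𝒢(R)` has a smallest element `> e`. -/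
def DiscreteR : Prop :=
  ∃ c ∈ ghost R, glt (eps R) c ∧ ∀ d ∈ ghost R, glt (eps R) d → gle c d

/-- `R` is dense: `𝒢(R)` has no smallest element `> e`. -/
def DenseR : Prop := ¬ DiscreteR R

/-- `eR` is a semifield: `e ≠ 0`, `𝒢(R)` is closed under multiplication, and every
element of `𝒢(R)` is invertible in `eR` with respect to the identity `e`. -/
def GhostSemifield : Prop :=
  eps R ∈ ghost R ∧
    (∀ g ∈ ghost R, ∀ h ∈ ghost R, g * h ∈ ghost R) ∧
    (∀ g ∈ ghost R, ∃ h ∈ ghost R, g * h = eps R)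

end SSF

section Quad

variable {R : Type*} [CommSemiring R] {V : Type*} [AddCommMonoid V] [Module R V]

/-- `b` is a (symmetric bilinear) companion of the quadratic form `q`. -/
def IsCompanion (q : V → R) (b : V → V → R) : Prop :=
  (∀ x y, b x y = b y x) ∧
    (∀ x y z, b (x + y) z = b x z + b y z) ∧
    (∀ (a : R) (x y : V), b (a • x) y = a * b x y) ∧
    (∀ x y, q (x + y) = q x + q y + b x y)

/-- `(q, b)` is a quadratic pair on `V`. -/
def IsQuadPair (q : V → R) (b : V → V → R) : Prop :=
  (∀ (a : R) (x : V), q (a • x) = a ^ 2 * q x) ∧ IsCompanion q b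

/-- `q` is a quadratic form on `V`. -/
def IsQuadForm (q : V → R) : Prop := ∃ b, IsQuadPair q b

/-- `q` is quasilinear (i.e. additive) on the submodule `W`. -/
def QuasilinearOn (q : V → R) (W : Submodule R V) : Prop :=
  ∀ u ∈ W, ∀ v ∈ W, q (u + v) = q u + q v

/-- `x` is `q`-minimal: `q x' < q x` for every `x' < x` (in the minimal orderings). -/
def QMinimal (q : V → R) (x : V) : Prop := ∀ x' : V, mlt x' x → mlt (q x') (q x)

/-- The maximum of two elements of `R` with respect to the minimal ordering. -/
noncomputable def rsup (a b : R) : R := if a = b then a else a + b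

/-- The componentwise maximum `x ∨ y` (in the minimal ordering) of two vectors
of a free module. -/
noncomputable def vsup {ι : Type*} (bV : Module.Basis ι R V) (x y : V) : V :=
  bV.repr.symm (Finsupp.zipWith rsup (by simp [rsup]) (bV.repr x) (bV.repr y))

/-- The restriction `x(J)` of a vector to a subset `J` of the index set of the base. -/
noncomputable def restrict {ι : Type*} (bV : Module.Basis ι R V) (x : V) (J : Finset ι) : V :=
  ∑ i ∈ J, (bV.repr x) i • bV i

/-- The CS-ratio `CS(x,y) = e·b(x,y)² · (e·q(x)·q(y))⁻¹`, where `inv` is the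
inversion of the semifield `eR`. -/
noncomputable def CSratio (q : V → R) (b : V → V → R) (inv : R → R) (x y : V) : R :=
  eps R * (b x y) ^ 2 * inv (eps R * (q x * q y))

end Quad

/-- The minimal ordering `x ≤ y ⟺ ∃ z, x + z = y` on any module `V`
over a supertropical semiring `R` is a partial order: reflexive, transitive and
antisymmetric; in particular if `x + z = y` and `y + w = x` then `x = y`. -/
theorem stmt0 {R : Type*} [CommSemiring R] (hR : IsSupertropical R)
    {V : Type*} [AddCommMonoid V] [Module R V] :
    (∀ x : V, mle x x) ∧
    (∀ x y z : V, mle x y → mle y z → mle x z) ∧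
    (∀ x y : V, mle x y → mle y x → x = y) ∧
    (∀ x y z w : V, x + z = y → y + w = x → x = y) := by
  obtain ⟨he, -, h3⟩ := hR
  have hee : eps R * eps R = eps R := by
    have h : eps R * eps R = eps R + eps R := by
      nth_rewrite 2 [eps]
      rw [mul_add, mul_one]
    rw [h, he]
  have he1 : eps R + 1 = eps R := by
    have h := h3 (eps R) 1 (by rw [hee, mul_one])
    rw [mul_one] at h
    exact h
  have h3R : (1 : R) + 1 + 1 = (1 : R) + 1 := by
    simpa [eps] using he1
  have key : ∀ v : V, v + v + v = v + v := by
    intro v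
    have h := congrArg (fun a : R => a • v) h3R
    simpa [add_smul, one_smul] using h
  have anti : ∀ x y z w : V, x + z = y → y + w = x → x = y := by
    intro x y z w hz hw
    have hx1 : x + (z + w) = x := by rw [← add_assoc, hz, hw]
    have hx2 : x + ((z + w) + (z + w)) = x := by
      rw [← add_assoc, hx1, hx1]
    have hxz : x + z = x := by
      calc x + z = (x + ((z + w) + (z + w))) + z := by rw [hx2]
        _ = x + (z + z + z + (w + w)) := by abel
        _ = x + (z + z + (w + w)) := by rw [key z]
        _ = x + ((z + w) + (z + w)) := by abel
        _ = x := hx2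
    rw [← hz, hxz]
  refine ⟨fun x => ⟨0, add_zero x⟩, ?_, ?_, anti⟩
  · rintro x y z ⟨a, ha⟩ ⟨b, hb⟩
    exact ⟨a + b, by rw [← add_assoc, ha, hb]⟩
  · rintro x y ⟨a, ha⟩ ⟨b, hb⟩
    exact anti x y a b ha hb

end Supertrop
end

section
/- Let R be a supertropical semiring with its minimal ordering (x ≤ y iff ∃z, x+z = y; x < y means x ≤ y and x ≠ y). Then: (a) for x ∈ eR and any y ∈ R, x and y are comparable, and (x < y ⟺ ex < ey), while (y < x ⟺ either ey < ex, or (y ∈ 𝒯(R) and ey = ex)); (b) for x ∈ 𝒯(R) and y ∈ R, (x < y ⟺ either ex < ey, or (ex = ey and y ∈ eR)), and (y < x ⟺ ey < ex); consequently x ∈ 𝒯(R) and y are incomparable exactly when y ∈ 𝒯(R), x ≠ y, and ex = ey. -/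
open scoped Classical

namespace Supertrop

section Aux

variable {R : Type*} [CommSemiring R]

lemma he2 (hR : IsSupertropical R) : eps R * eps R = eps R := by
  have h : eps R * eps R = eps R + eps R := by
    show ((1:R)+1) * ((1:R)+1) = ((1:R)+1) + ((1:R)+1); ring
  rw [h, hR.1]

lemma hea (hR : IsSupertropical R) (a : R) : eps R * (eps R * a) = eps R * a := by
  rw [← mul_assoc, he2 hR]

lemma habs (hR : IsSupertropical R) (x : R) : x + eps R * x = eps R * x := by
  have h := hR.2.2 x (eps R * x) (by rw [hea hR])
  rwa [hea hR] at h

lemma mem_eSet_iff (hR : IsSupertropical R) (y : R) :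
    y ∈ eSet R ↔ eps R * y = y := by
  constructor
  · rintro ⟨a, rfl⟩; exact hea hR a
  · intro h; exact ⟨y, h⟩

lemma trich (hR : IsSupertropical R) (x y : R) :
    glt (eps R * x) (eps R * y) ∨ eps R * x = eps R * y ∨
      glt (eps R * y) (eps R * x) := by
  by_cases h : eps R * x = eps R * y
  · exact Or.inr (Or.inl h)
  · have h' : eps R * (eps R * x) ≠ eps R * (eps R * y) := by
      rw [hea hR, hea hR]; exact h
    rcases hR.2.1 (eps R * x) (eps R * y) h' with h1 | h1
    · refine Or.inr (Or.inr ⟨?_, Ne.symm h⟩)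
      show eps R * y + eps R * x = eps R * x
      rw [add_comm]; exact h1
    · exact Or.inl ⟨h1, h⟩

lemma add_eq_iff (hR : IsSupertropical R) (x y : R) :
    x + y = y ↔ glt (eps R * x) (eps R * y) ∨
      (eps R * x = eps R * y ∧ eps R * y = y) := by
  constructor
  · intro h
    have he : eps R * x + eps R * y = eps R * y := by
      rw [← mul_add, h]
    by_cases hxy : eps R * x = eps R * y
    · refine Or.inr ⟨hxy, ?_⟩
      have := hR.2.2 x y hxy
      rw [h] at this; exact this.symm
    · exact Or.inl ⟨he, hxy⟩
  · rintro (⟨h1, h2⟩ | ⟨h1, h2⟩)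
    · rcases hR.2.1 x y h2 with h3 | h3
      · exfalso
        have : eps R * x + eps R * y = eps R * x := by rw [← mul_add, h3]
        exact h2 (by rw [← h1, this])
      · exact h3
    · rw [hR.2.2 x y h1, h2]

lemma mle_iff (hR : IsSupertropical R) (x y : R) :
    mle x y ↔ x = y ∨ glt (eps R * x) (eps R * y) ∨
      (eps R * x = eps R * y ∧ eps R * y = y) := by
  constructor
  · rintro ⟨z, hz⟩
    by_cases h : eps R * x = eps R * z
    · have hy : y = eps R * z := by rw [← hz, hR.2.2 x z h]
      right
      rw [← add_eq_iff hR]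
      rw [hy, ← h]; exact habs hR x
    · rcases hR.2.1 x z h with h1 | h1
      · exact Or.inl (by rw [← hz, h1])
      · have hy : y = z := by rw [← hz, h1]
        subst hy
        exact Or.inr ((add_eq_iff hR x y).1 h1)
  · rintro (rfl | h)
    · exact ⟨0, add_zero x⟩
    · exact ⟨y, (add_eq_iff hR x y).2 h⟩

lemma mlt_iff (hR : IsSupertropical R) (x y : R) :
    mlt x y ↔ glt (eps R * x) (eps R * y) ∨
      (eps R * x = eps R * y ∧ eps R * y = y ∧ x ≠ y) := by
  constructor
  · rintro ⟨hle, hne⟩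
    rcases (mle_iff hR x y).1 hle with rfl | h | ⟨h1, h2⟩
    · exact absurd rfl hne
    · exact Or.inl h
    · exact Or.inr ⟨h1, h2, hne⟩
  · rintro (⟨h1, h2⟩ | ⟨h1, h2, h3⟩)
    · exact ⟨(mle_iff hR x y).2 (Or.inr (Or.inl ⟨h1, h2⟩)),
        fun h => h2 (by rw [h])⟩
    · exact ⟨(mle_iff hR x y).2 (Or.inr (Or.inr ⟨h1, h2⟩)), h3⟩

end Aux

/-- description of the minimal ordering of a supertropical semiring in
terms of the `ν`-dominance relation, the ghost ideal `eR` and the tangible elements. -/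
theorem stmt1 {R : Type*} [CommSemiring R] (hR : IsSupertropical R) :
    (∀ x ∈ eSet R, ∀ y : R,
      (mle x y ∨ mle y x) ∧
      (mlt x y ↔ glt (eps R * x) (eps R * y)) ∧
      (mlt y x ↔ (glt (eps R * y) (eps R * x) ∨
        (y ∈ tangible R ∧ eps R * y = eps R * x)))) ∧
    (∀ x ∈ tangible R, ∀ y : R,
      (mlt x y ↔ (glt (eps R * x) (eps R * y) ∨
        (eps R * x = eps R * y ∧ y ∈ eSet R))) ∧
      (mlt y x ↔ glt (eps R * y) (eps R * x)) ∧
      ((¬ mle x y ∧ ¬ mle y x) ↔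
        (y ∈ tangible R ∧ x ≠ y ∧ eps R * x = eps R * y))) := by
  constructor
  · intro x hx y
    have hxe : eps R * x = x := (mem_eSet_iff hR x).1 hx
    refine ⟨?_, ?_, ?_⟩
    · rcases trich hR x y with h | h | h
      · exact Or.inl ⟨y, (add_eq_iff hR x y).2 (Or.inl h)⟩
      · refine Or.inr ⟨x, ?_⟩
        rw [hR.2.2 y x h.symm, hxe]
      · exact Or.inr ⟨x, (add_eq_iff hR y x).2 (Or.inl h)⟩
    · rw [mlt_iff hR]
      constructor
      · rintro (h | ⟨h1, h2, h3⟩)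
        · exact h
        · exact absurd (by rw [← hxe, h1, h2]) h3
      · exact Or.inl
    · rw [mlt_iff hR]
      constructor
      · rintro (h | ⟨h1, h2, h3⟩)
        · exact Or.inl h
        · refine Or.inr ⟨fun hy => h3 ?_, h1⟩
          rw [← (mem_eSet_iff hR y).1 hy, h1, hxe]
      · rintro (h | ⟨h1, h2⟩)
        · exact Or.inl h
        · exact Or.inr ⟨h2, hxe, fun h => h1 (by rw [h]; exact hx)⟩
  · intro x hx y
    have hxt : x ∉ eSet R := hx
    refine ⟨?_, ?_, ?_⟩
    · rw [mlt_iff hR]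
      constructor
      · rintro (h | ⟨h1, h2, h3⟩)
        · exact Or.inl h
        · exact Or.inr ⟨h1, (mem_eSet_iff hR y).2 h2⟩
      · rintro (h | ⟨h1, h2⟩)
        · exact Or.inl h
        · exact Or.inr ⟨h1, (mem_eSet_iff hR y).1 h2,
            fun h => hxt (h ▸ h2)⟩
    · rw [mlt_iff hR]
      constructor
      · rintro (h | ⟨h1, h2, h3⟩)
        · exact h
        · exact absurd ((mem_eSet_iff hR x).2 h2) hxt
      · exact Or.inl
    · constructor
      · rintro ⟨h1, h2⟩
        have hne : x ≠ y := fun h => h1 ((mle_iff hR x y).2 (Or.inl h))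
        have hexy : eps R * x = eps R * y := by
          rcases trich hR x y with h | h | h
          · exact absurd ((mle_iff hR x y).2 (Or.inr (Or.inl h))) h1
          · exact h
          · exact absurd ((mle_iff hR y x).2 (Or.inr (Or.inl h))) h2
        refine ⟨fun hy => h1 ((mle_iff hR x y).2 (Or.inr (Or.inr
          ⟨hexy, (mem_eSet_iff hR y).1 hy⟩))), hne, hexy⟩
      · rintro ⟨hyt, hne, hexy⟩
        constructor
        · rintro h
          rcases (mle_iff hR x y).1 h with rfl | ⟨h1, h2⟩ | ⟨h1, h2⟩
          · exact hne rfl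
          · exact h2 hexy
          · exact hyt ((mem_eSet_iff hR y).2 h2)
        · rintro h
          rcases (mle_iff hR y x).1 h with rfl | ⟨h1, h2⟩ | ⟨h1, h2⟩
          · exact hne rfl
          · exact h2 hexy.symm
          · exact hxt ((mem_eSet_iff hR x).2 h2)


end Supertrop
end

section
/- Let R be a supertropical semiring, q a quadratic form on an R-module V, and x, y ∈ V. Then the following are equivalent: (i) q(λx + μy) = q(λx) + q(μy) for all λ, μ ∈ R; (ii) q is quasilinear on the submodule Rx + Ry, i.e. q(u+v) = q(u) + q(v) for all u, v ∈ Rx + Ry. -/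
open scoped Classical

namespace Supertrop

/-- Frobenius property in a supertropical semiring: `(a+b)² = a² + b²`. -/
theorem sq_add_of_supertropical {R : Type*} [CommSemiring R] (hR : IsSupertropical R)
    (a b : R) : (a + b) ^ 2 = a ^ 2 + b ^ 2 := by
  obtain ⟨he, h1, h2⟩ := hR
  by_cases h : eps R * a = eps R * b
  · have hab : a + b = eps R * b := h2 a b h
    have hsq : eps R * a ^ 2 = eps R * b ^ 2 := by
      have e1 : eps R * a ^ 2 = eps R * (a * b) := by
        calc eps R * a ^ 2 = (eps R * a) * a := by ring
          _ = (eps R * b) * a := by rw [h]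
          _ = eps R * (a * b) := by ring
      have e2 : eps R * (a * b) = eps R * b ^ 2 := by
        calc eps R * (a * b) = (eps R * a) * b := by ring
          _ = (eps R * b) * b := by rw [h]
          _ = eps R * b ^ 2 := by ring
      rw [e1, e2]
    have h3 : a ^ 2 + b ^ 2 = eps R * b ^ 2 := h2 _ _ hsq
    have heps : eps R * eps R = eps R := by
      calc eps R * eps R = eps R * 1 + eps R * 1 := by rw [← mul_add]; rfl
        _ = eps R := by rw [mul_one]; exact he
    calc (a + b) ^ 2 = (eps R * b) ^ 2 := by rw [hab]
      _ = (eps R * eps R) * b ^ 2 := by ring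
      _ = eps R * b ^ 2 := by rw [heps]
      _ = a ^ 2 + b ^ 2 := h3.symm
  · rcases h1 a b h with hab | hab
    · have e1 : a ^ 2 + a * b = a ^ 2 := by
        calc a ^ 2 + a * b = a * (a + b) := by ring
          _ = a ^ 2 := by rw [hab]; ring
      have e2 : a * b + b ^ 2 = a * b := by
        calc a * b + b ^ 2 = (a + b) * b := by ring
          _ = a * b := by rw [hab]
      calc (a + b) ^ 2 = a ^ 2 := by rw [hab]
        _ = a ^ 2 + a * b := e1.symm
        _ = a ^ 2 + (a * b + b ^ 2) := by rw [e2]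
        _ = (a ^ 2 + a * b) + b ^ 2 := by ring
        _ = a ^ 2 + b ^ 2 := by rw [e1]
    · have e1 : b ^ 2 + a * b = b ^ 2 := by
        calc b ^ 2 + a * b = b * (a + b) := by ring
          _ = b ^ 2 := by rw [hab]; ring
      have e2 : a * b + a ^ 2 = a * b := by
        calc a * b + a ^ 2 = (a + b) * a := by ring
          _ = a * b := by rw [hab]; ring
      calc (a + b) ^ 2 = b ^ 2 := by rw [hab]
        _ = b ^ 2 + a * b := e1.symm
        _ = b ^ 2 + (a * b + a ^ 2) := by rw [e2]
        _ = (b ^ 2 + a * b) + a ^ 2 := by ring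
        _ = b ^ 2 + a ^ 2 := by rw [e1]
        _ = a ^ 2 + b ^ 2 := by ring

/-- `q(λx + μy) = q(λx) + q(μy)` for all scalars `λ, μ` iff `q` is
quasilinear on the submodule `Rx + Ry`. -/
theorem stmt2 {R : Type*} [CommSemiring R] (hR : IsSupertropical R)
    {V : Type*} [AddCommMonoid V] [Module R V] (q : V → R) (hq : IsQuadForm q)
    (x y : V) :
    (∀ a c : R, q (a • x + c • y) = q (a • x) + q (c • y)) ↔
      QuasilinearOn q (Submodule.span R {x, y}) := by
  obtain ⟨b, hscale, hcomp⟩ := hq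
  constructor
  · intro h u hu v hv
    obtain ⟨a, c, rfl⟩ := Submodule.mem_span_pair.mp hu
    obtain ⟨a', c', rfl⟩ := Submodule.mem_span_pair.mp hv
    have key : ∀ s t : R, q (s • x + t • y) = s ^ 2 * q x + t ^ 2 * q y := by
      intro s t
      rw [h s t, hscale, hscale]
    have hsum : (a • x + c • y) + (a' • x + c' • y) = (a + a') • x + (c + c') • y := by
      rw [add_smul, add_smul]; abel
    rw [hsum, key, key, key, sq_add_of_supertropical hR, sq_add_of_supertropical hR]
    ring
  · intro h a c
    refine h (a • x) ?_ (c • y) ?_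
    · exact Submodule.smul_mem _ a (Submodule.subset_span (by simp))
    · exact Submodule.smul_mem _ c (Submodule.subset_span (by simp))

end Supertrop
end

section
/- Let R be a nontrivial tangible supersemifield which is dense, and let (q,b) be a quadratic pair on an R-module V. For any x, y ∈ V: q is quasilinear on Rx + Ry if and only if e·b(x,y)² ≤ e·q(x)·q(y) in the totally ordered set eR. Moreover, if e·b(x,y)² > e·q(x)·q(y), then q is rigid at (x,y), i.e. every companion b' of q satisfies b'(x,y) = b(x,y). -/
open scoped Classical

namespace Supertrop

section Helpers

variable {R : Type*} [CommSemiring R]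

lemma e2 (st : IsSupertropical R) : eps R * eps R = eps R := by
  have h : eps R * eps R = eps R + eps R := by unfold eps; ring
  rw [h, st.1]

lemma e_idem (st : IsSupertropical R) (a : R) : eps R * (eps R * a) = eps R * a := by
  rw [← mul_assoc, e2 st]

lemma emul (st : IsSupertropical R) (u v : R) :
    (eps R * u) * (eps R * v) = eps R * (u * v) := by
  rw [mul_mul_mul_comm, e2 st]

lemma add_self' (st : IsSupertropical R) (a : R) : a + a = eps R * a :=
  st.2.2 a a rfl

lemma ghost_fix (st : IsSupertropical R) {g : R} (hg : g ∈ eSet R) :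
    eps R * g = g := by
  obtain ⟨t, rfl⟩ := hg
  exact e_idem st t

lemma fix_comm (st : IsSupertropical R) {g : R} (hg : g ∈ ghost R) : g * eps R = g := by
  rw [mul_comm]; exact ghost_fix st hg.1

lemma gle_trans {a b c : R} (h1 : gle a b) (h2 : gle b c) : gle a c := by
  have h1' : a + b = b := h1
  have h2' : b + c = c := h2
  show a + c = c
  calc a + c = a + (b + c) := by rw [h2']
    _ = (a + b) + c := by ring
    _ = b + c := by rw [h1']
    _ = c := h2'

lemma gle_antisymm {a b : R} (h1 : gle a b) (h2 : gle b a) : a = b := by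
  have h1' : a + b = b := h1
  have h2' : b + a = a := h2
  calc a = b + a := h2'.symm
    _ = a + b := add_comm _ _
    _ = b := h1'

lemma gle_add {a b c : R} (h1 : gle a c) (h2 : gle b c) : gle (a + b) c := by
  show a + b + c = c
  have h1' : a + c = c := h1
  have h2' : b + c = c := h2
  calc a + b + c = a + (b + c) := by ring
    _ = a + c := by rw [h2']
    _ = c := h1'

lemma gle_mul {a b : R} (c : R) (h : gle a b) : gle (c * a) (c * b) := by
  show c * a + c * b = c * b
  rw [← mul_add, (h : a + b = b)]

lemma gle_resp {A A' B B' : R} (hA : A = A') (hB : B = B') (h : gle A B) : gle A' B' := by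
  subst hA; subst hB; exact h

lemma glt_resp {A A' B B' : R} (hA : A = A') (hB : B = B') (h : glt A B) : glt A' B' := by
  subst hA; subst hB; exact h

lemma bipot (st : IsSupertropical R) (u v : R) :
    eps R * u + eps R * v = eps R * u ∨ eps R * u + eps R * v = eps R * v := by
  by_cases h : eps R * (eps R * u) = eps R * (eps R * v)
  · right
    rw [st.2.2 (eps R * u) (eps R * v) h]
    exact e_idem st v
  · rcases st.2.1 _ _ h with h' | h'
    · left; exact h'
    · right; exact h'

lemma gle_refl_ghost (st : IsSupertropical R) (u : R) :
    gle (eps R * u) (eps R * u) := by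
  show eps R * u + eps R * u = eps R * u
  rw [add_self' st, e_idem st]

lemma gle_total (st : IsSupertropical R) (u v : R) :
    gle (eps R * u) (eps R * v) ∨ gle (eps R * v) (eps R * u) := by
  rcases bipot st u v with h | h
  · right; show eps R * v + eps R * u = eps R * u; rw [add_comm]; exact h
  · left; exact h

lemma glt_of_not_gle (st : IsSupertropical R) {u v : R}
    (h : ¬ gle (eps R * u) (eps R * v)) : glt (eps R * v) (eps R * u) := by
  rcases gle_total st u v with h' | h'
  · exact absurd h' h
  · exact ⟨h', fun he => h (gle_resp he he.symm h')⟩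

lemma absorb_lt (st : IsSupertropical R) {s z : R}
    (h1 : eps R * s + eps R * z = eps R * z) (h2 : eps R * s ≠ eps R * z) :
    s + z = z := by
  rcases st.2.1 s z h2 with h | h
  · exfalso
    apply h2
    have h3 : eps R * (s + z) = eps R * s := by rw [h]
    rw [mul_add, h1] at h3
    exact h3.symm
  · exact h

lemma eghost_mem (ssf : IsSupersemifield R) (htan : TangibleSSF R) {a : R} (ha : a ≠ 0) :
    eps R * a ∈ ghost R := by
  by_cases h : a ∈ eSet R
  · rw [ghost_fix ssf.1 h]; exact ⟨h, ha⟩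
  · rw [← htan]; exact ⟨a, h, rfl⟩

lemma cancelE (ssf : IsSupersemifield R) {c u v : R} (hc : c ≠ 0)
    (h : c * u = c * v) : eps R * u = eps R * v := by
  by_cases hcs : c ∈ eSet R
  · obtain ⟨d, hd, hcd⟩ := ssf.2.2.2.2 c ⟨hcs, hc⟩
    calc eps R * u = (c * d) * u := by rw [hcd]
      _ = d * (c * u) := by ring
      _ = d * (c * v) := by rw [h]
      _ = (c * d) * v := by ring
      _ = eps R * v := by rw [hcd]
  · have hu := ssf.2.1 c hcs
    rw [hu.mul_left_cancel h]

lemma glt_mul (ssf : IsSupersemifield R) {a b : R} (c : R) (hc : c ≠ 0)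
    (ha : eps R * a = a) (hb : eps R * b = b) (h : glt a b) : glt (c * a) (c * b) := by
  refine ⟨gle_mul c h.1, fun he => h.2 ?_⟩
  have h3 := cancelE ssf hc he
  rw [ha, hb] at h3; exact h3

lemma glt_cancel (ssf : IsSupersemifield R) {a b c : R} (hc : c ≠ 0)
    (ha : eps R * a = a) (hb : eps R * b = b) (h : glt (c * a) (c * b)) : glt a b := by
  refine ⟨?_, fun he => h.2 (by rw [he])⟩
  have h1 : c * a + c * b = c * b := h.1
  have h2 : c * (a + b) = c * b := by rw [mul_add, h1]
  have h3 := cancelE ssf hc h2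
  rw [mul_add, ha, hb] at h3
  exact h3

lemma unit_mul_ne {a z : R} (ha : IsUnit a) (hz : z ≠ 0) : a * z ≠ 0 := fun h =>
  hz (ha.mul_left_cancel (by rw [h, mul_zero]))

lemma ghost_rep (ssf : IsSupersemifield R) (htan : TangibleSSF R) {m : R}
    (hm : m ∈ ghost R) : ∃ a : R, IsUnit a ∧ eps R * a = m := by
  rw [← htan] at hm
  obtain ⟨a, ha, rfl⟩ := hm
  exact ⟨a, ssf.2.1 a ha, rfl⟩

lemma glt_zero (ssf : IsSupersemifield R) (htan : TangibleSSF R) {z : R} (hz : z ≠ 0) :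
    glt (eps R * 0) (eps R * z) := by
  constructor
  · show eps R * 0 + eps R * z = eps R * z
    rw [mul_zero, zero_add]
  · rw [mul_zero]
    exact fun h => (eghost_mem ssf htan hz).2 h.symm

end Helpers


section Helpers2

variable {R : Type*} [CommSemiring R]

lemma lemB_aux (ssf : IsSupersemifield R) (htan : TangibleSSF R) (p q s : R)
    (h : gle (eps R * (s * s)) (eps R * (p * q)))
    (hm : eps R * p + eps R * q = eps R * q) :
    p + q + s = p + q := by
  have st := ssf.1
  by_cases hs : s = 0
  · simp [hs]
  have hes : eps R * s ≠ 0 := (eghost_mem ssf htan hs).2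
  have h' : gle ((eps R * s) * (eps R * s)) ((eps R * p) * (eps R * q)) :=
    gle_resp (emul st s s).symm (emul st p q).symm h
  have hsq : gle (eps R * s) (eps R * q) := by
    rcases gle_total st s q with h1 | h1
    · exact h1
    · by_cases heq : eps R * s = eps R * q
      · exact gle_resp rfl heq (gle_refl_ghost st s)
      exfalso
      have c1 : gle ((eps R * p) * (eps R * q)) ((eps R * q) * (eps R * q)) :=
        gle_resp (mul_comm _ _) rfl
          (gle_mul (eps R * q) (show gle (eps R * p) (eps R * q) from hm))
      have c2 : gle ((eps R * q) * (eps R * q)) ((eps R * s) * (eps R * q)) :=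
        gle_resp rfl (mul_comm _ _) (gle_mul (eps R * q) h1)
      have c3 : gle ((eps R * s) * (eps R * q)) ((eps R * s) * (eps R * s)) :=
        gle_mul (eps R * s) h1
      have e1 : (eps R * s) * (eps R * q) = (eps R * s) * (eps R * s) :=
        gle_antisymm c3 (gle_trans (gle_trans h' c1) c2)
      have e2' := cancelE ssf hes e1
      rw [e_idem st, e_idem st] at e2'
      exact heq e2'.symm
  by_cases heq : eps R * s = eps R * q
  · have hpq : eps R * p = eps R * q := by
      by_contra hne
      have hlt : glt (eps R * p) (eps R * q) := ⟨hm, hne⟩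
      have hq0 : eps R * q ≠ 0 := by rw [← heq]; exact hes
      have h2 : glt ((eps R * q) * (eps R * p)) ((eps R * q) * (eps R * q)) :=
        glt_mul ssf (eps R * q) hq0 (e_idem st p) (e_idem st q) hlt
      have h3 : gle ((eps R * q) * (eps R * q)) ((eps R * q) * (eps R * p)) := by
        have h4 : gle ((eps R * s) * (eps R * s)) ((eps R * p) * (eps R * q)) := h'
        rw [heq] at h4
        exact gle_resp rfl (mul_comm _ _) h4
      exact h2.2 (gle_antisymm h2.1 h3)
    have hpq2 : p + q = eps R * q := st.2.2 p q hpq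
    have hsq2 : s + eps R * q = eps R * q := by
      have h5 : eps R * s = eps R * (eps R * q) := by rw [e_idem st]; exact heq
      rw [st.2.2 s (eps R * q) h5, e_idem st]
    rw [hpq2]
    calc eps R * q + s = s + eps R * q := by ring
      _ = eps R * q := hsq2
  · have habs : s + (p + q) = p + q := by
      apply absorb_lt st
      · rw [mul_add, hm]; exact hsq
      · rw [mul_add, hm]; exact heq
    calc p + q + s = s + (p + q) := by ring
      _ = p + q := habs

lemma lemB (ssf : IsSupersemifield R) (htan : TangibleSSF R) (p q s : R)
    (h : gle (eps R * (s * s)) (eps R * (p * q))) :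
    p + q + s = p + q := by
  rcases bipot ssf.1 p q with hm | hm
  · have h2 := lemB_aux ssf htan q p s (gle_resp rfl (by ring) h)
      (by rw [add_comm]; exact hm)
    calc p + q + s = q + p + s := by ring
      _ = q + p := h2
      _ = p + q := by ring
  · exact lemB_aux ssf htan p q s h hm

lemma lemB_ghost (ssf : IsSupersemifield R) (htan : TangibleSSF R) (p q t : R)
    (h : gle (eps R * (t * t)) (eps R * (p * q))) :
    p + q + eps R * t = p + q := by
  apply lemB ssf htan p q (eps R * t)
  have st := ssf.1
  rw [emul st, e_idem st]
  exact h

lemma exists_gt_e (ssf : IsSupersemifield R) (hnt : NontrivialG R) :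
    ∃ d ∈ ghost R, glt (eps R) d := by
  have st := ssf.1
  have hE : eps R ∈ ghost R := ssf.2.2.1
  have hsub : ¬ ghost R ⊆ {eps R} := by
    intro hsub
    exact hnt (Set.Subset.antisymm hsub (by
      intro z hz
      rw [Set.mem_singleton_iff] at hz
      rw [hz]; exact hE))
  obtain ⟨h, hh, hne⟩ := Set.not_subset.mp hsub
  rw [Set.mem_singleton_iff] at hne
  have hfix : eps R * h = h := ghost_fix st hh.1
  rcases gle_total st h 1 with h1 | h1
  · rw [hfix, mul_one] at h1
    obtain ⟨d, hd, hdh⟩ := ssf.2.2.2.2 h hh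
    refine ⟨d, hd, ?_⟩
    have h2 := glt_mul ssf d hd.2 hfix (e2 st) ⟨h1, hne⟩
    refine glt_resp ?_ ?_ h2
    · rw [mul_comm]; exact hdh
    · rw [mul_comm]; exact ghost_fix st hd.1
  · rw [hfix, mul_one] at h1
    exact ⟨h, hh, h1, Ne.symm hne⟩

lemma between (ssf : IsSupersemifield R) (htan : TangibleSSF R) (hdense : DenseR R)
    {g h : R} (hg : g ∈ ghost R) (hh : h ∈ ghost R) (hlt : glt g h) :
    ∃ m ∈ ghost R, glt g m ∧ glt m h := by
  have st := ssf.1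
  obtain ⟨g', hg', hgg'⟩ := ssf.2.2.2.2 g hg
  have hk : h * g' ∈ ghost R := ssf.2.2.2.1 h hh g' hg'
  have hEk : glt (eps R) (h * g') := by
    have h2 := glt_mul ssf g' hg'.2 (ghost_fix st hg.1) (ghost_fix st hh.1) hlt
    refine glt_resp ?_ (mul_comm _ _) h2
    rw [mul_comm]; exact hgg'
  have hdd : ∃ d ∈ ghost R, glt (eps R) d ∧ glt d (h * g') := by
    by_contra hno
    push_neg at hno
    apply hdense
    refine ⟨h * g', hk, hEk, fun d hd hEd => ?_⟩
    have hnlt := hno d hd hEd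
    rcases gle_total st (h * g') d with h1 | h1
    · rw [ghost_fix st hd.1, ghost_fix st hk.1] at h1
      exact h1
    · rw [ghost_fix st hd.1, ghost_fix st hk.1] at h1
      by_cases hdk : d = h * g'
      · rw [hdk]
        show h * g' + h * g' = h * g'
        rw [add_self' st]
        exact ghost_fix st hk.1
      · exact absurd ⟨h1, hdk⟩ hnlt
  obtain ⟨d, hd, hEd, hdk⟩ := hdd
  refine ⟨g * d, ssf.2.2.2.1 g hg d hd, ?_, ?_⟩
  · have h2 := glt_mul ssf g hg.2 (e2 st) (ghost_fix st hd.1) hEd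
    refine glt_resp ?_ rfl h2
    exact fix_comm st hg
  · have h2 := glt_mul ssf g hg.2 (ghost_fix st hd.1) (ghost_fix st hk.1) hdk
    refine glt_resp rfl ?_ h2
    calc g * (h * g') = (g * g') * h := by ring
      _ = eps R * h := by rw [hgg']
      _ = h := ghost_fix st hh.1

lemma cond2_of (ssf : IsSupersemifield R) (htan : TangibleSSF R) {a m β γ : R}
    (ha : eps R * a = m) (hm : m ∈ ghost R) (hβ : eps R * β ∈ ghost R)
    (h : glt (m * (eps R * β)) (eps R * γ)) :
    glt (eps R * (a ^ 2 * β)) (eps R * (a * γ)) := by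
  have st := ssf.1
  have hmb : eps R * (m * (eps R * β)) = m * (eps R * β) :=
    ghost_fix st (ssf.2.2.2.1 m hm _ hβ).1
  have h2 := glt_mul ssf m hm.2 hmb (e_idem st γ) h
  refine glt_resp ?_ ?_ h2
  · calc m * (m * (eps R * β)) = (eps R * a) * ((eps R * a) * (eps R * β)) := by rw [ha]
      _ = (eps R * a) * (eps R * (a * β)) := by rw [emul st a β]
      _ = eps R * (a * (a * β)) := by rw [emul st a (a * β)]
      _ = eps R * (a ^ 2 * β) := by ring
  · calc m * (eps R * γ) = (eps R * a) * (eps R * γ) := by rw [ha]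
      _ = eps R * (a * γ) := emul st a γ

end Helpers2


section KeyLemma

variable {R : Type*} [CommSemiring R]

lemma key (ssf : IsSupersemifield R) (htan : TangibleSSF R) (hnt : NontrivialG R)
    (hdense : DenseR R) {α β γ : R}
    (hlt : glt (eps R * (α * β)) (eps R * γ ^ 2)) :
    ∃ a : R, IsUnit a ∧ glt (eps R * α) (eps R * (a * γ)) ∧
      glt (eps R * (a ^ 2 * β)) (eps R * (a * γ)) := by
  have st := ssf.1
  have hγ : γ ≠ 0 := by
    rintro rfl
    apply hlt.2
    have h1 : eps R * (α * β) + eps R * (0 : R) ^ 2 = eps R * (0 : R) ^ 2 := hlt.1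
    rw [show ((0 : R) ^ 2) = 0 by ring, mul_zero, add_zero] at h1
    rw [show ((0 : R) ^ 2) = 0 by ring, mul_zero]
    exact h1
  have hg : eps R * γ ∈ ghost R := eghost_mem ssf htan hγ
  by_cases hβ : β = 0
  · by_cases hα : α = 0
    · obtain ⟨a, hau, ha⟩ := ghost_rep ssf htan ssf.2.2.1
      have haγ : a * γ ≠ 0 := unit_mul_ne hau hγ
      subst hα; subst hβ
      refine ⟨a, hau, glt_zero ssf htan haγ, ?_⟩
      have h0 := glt_zero ssf htan haγ
      rw [mul_zero] at h0
      rw [show eps R * (a ^ 2 * (0 : R)) = 0 by ring]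
      exact h0
    · have hα' : eps R * α ∈ ghost R := eghost_mem ssf htan hα
      obtain ⟨d, hd, hEd⟩ := exists_gt_e ssf hnt
      obtain ⟨gi, hgi, hggi⟩ := ssf.2.2.2.2 (eps R * γ) hg
      have hm : eps R * α * gi * d ∈ ghost R :=
        ssf.2.2.2.1 _ (ssf.2.2.2.1 _ hα' gi hgi) d hd
      obtain ⟨a, hau, ha⟩ := ghost_rep ssf htan hm
      have haγ : a * γ ≠ 0 := unit_mul_ne hau hγ
      have hEaγ : eps R * (a * γ) = (eps R * α) * d := by
        calc eps R * (a * γ) = (eps R * a) * (eps R * γ) := (emul st a γ).symm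
          _ = (eps R * α * gi * d) * (eps R * γ) := by rw [ha]
          _ = (eps R * α) * d * ((eps R * γ) * gi) := by ring
          _ = (eps R * α) * d * eps R := by rw [hggi]
          _ = eps R * ((eps R * α) * d) := by ring
          _ = (eps R * α) * d := ghost_fix st (ssf.2.2.2.1 _ hα' d hd).1
      refine ⟨a, hau, ?_, ?_⟩
      · have h2 := glt_mul ssf (eps R * α) hα'.2 (e2 st) (ghost_fix st hd.1) hEd
        exact glt_resp (fix_comm st hα') hEaγ.symm h2
      · rw [hβ, mul_zero]
        exact glt_zero ssf htan haγ
  · have hβ' : eps R * β ∈ ghost R := eghost_mem ssf htan hβ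
    obtain ⟨bi, hbi, hbbi⟩ := ssf.2.2.2.2 (eps R * β) hβ'
    by_cases hα : α = 0
    · obtain ⟨d, hd, hEd⟩ := exists_gt_e ssf hnt
      obtain ⟨di, hdi, hddi⟩ := ssf.2.2.2.2 d hd
      have hdiE : glt di (eps R) := by
        have h2 := glt_mul ssf di hdi.2 (e2 st) (ghost_fix st hd.1) hEd
        refine glt_resp (fix_comm st hdi) ?_ h2
        rw [mul_comm]; exact hddi
      have hm : eps R * γ * bi * di ∈ ghost R :=
        ssf.2.2.2.1 _ (ssf.2.2.2.1 _ hg bi hbi) di hdi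
      obtain ⟨a, hau, ha⟩ := ghost_rep ssf htan hm
      have haγ : a * γ ≠ 0 := unit_mul_ne hau hγ
      refine ⟨a, hau, ?_, ?_⟩
      · rw [hα]
        exact glt_zero ssf htan haγ
      · apply cond2_of ssf htan ha hm hβ'
        have hmb : (eps R * γ * bi * di) * (eps R * β) = (eps R * γ) * di := by
          calc (eps R * γ * bi * di) * (eps R * β)
              = (eps R * γ) * di * ((eps R * β) * bi) := by ring
            _ = (eps R * γ) * di * eps R := by rw [hbbi]
            _ = eps R * ((eps R * γ) * di) := by ring
            _ = (eps R * γ) * di := ghost_fix st (ssf.2.2.2.1 _ hg di hdi).1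
        have h2 := glt_mul ssf (eps R * γ) hg.2 (ghost_fix st hdi.1) (e2 st) hdiE
        exact glt_resp hmb.symm (fix_comm st hg) h2
    · have hα' : eps R * α ∈ ghost R := eghost_mem ssf htan hα
      obtain ⟨gi, hgi, hggi⟩ := ssf.2.2.2.2 (eps R * γ) hg
      have hpg : eps R * α * gi ∈ ghost R := ssf.2.2.2.1 _ hα' gi hgi
      have hrg : eps R * γ * bi ∈ ghost R := ssf.2.2.2.1 _ hg bi hbi
      have hcg : (eps R * γ) * (eps R * β) ∈ ghost R := ssf.2.2.2.1 _ hg _ hβ'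
      have hpr : glt (eps R * α * gi) (eps R * γ * bi) := by
        apply glt_cancel ssf (c := (eps R * γ) * (eps R * β)) hcg.2
          (ghost_fix st hpg.1) (ghost_fix st hrg.1)
        refine glt_resp ?_ ?_ hlt
        · calc eps R * (α * β) = eps R * (eps R * (α * β)) := (e_idem st _).symm
            _ = ((eps R * α) * (eps R * β)) * eps R := by rw [emul st α β]; ring
            _ = ((eps R * α) * (eps R * β)) * ((eps R * γ) * gi) := by rw [hggi]
            _ = (eps R * γ) * (eps R * β) * (eps R * α * gi) := by ring
        · calc eps R * γ ^ 2 = eps R * (eps R * (γ * γ)) := by rw [e_idem st]; ring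
            _ = ((eps R * γ) * (eps R * γ)) * eps R := by rw [emul st γ γ]; ring
            _ = ((eps R * γ) * (eps R * γ)) * ((eps R * β) * bi) := by rw [hbbi]
            _ = (eps R * γ) * (eps R * β) * (eps R * γ * bi) := by ring
      obtain ⟨m, hm, hpm, hmr⟩ := between ssf htan hdense hpg hrg hpr
      obtain ⟨a, hau, ha⟩ := ghost_rep ssf htan hm
      refine ⟨a, hau, ?_, ?_⟩
      · have h1 := glt_mul ssf (eps R * γ) hg.2 (ghost_fix st hpg.1) (ghost_fix st hm.1) hpm
        refine glt_resp ?_ ?_ h1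
        · calc (eps R * γ) * (eps R * α * gi)
              = (eps R * α) * ((eps R * γ) * gi) := by ring
            _ = (eps R * α) * eps R := by rw [hggi]
            _ = eps R * α := fix_comm st hα'
        · calc (eps R * γ) * m = (eps R * a) * (eps R * γ) := by rw [ha]; ring
            _ = eps R * (a * γ) := emul st a γ
      · apply cond2_of ssf htan ha hm hβ'
        have h1 := glt_mul ssf (eps R * β) hβ'.2 (ghost_fix st hm.1) (ghost_fix st hrg.1) hmr
        refine glt_resp ?_ ?_ h1
        · ring
        · calc (eps R * β) * (eps R * γ * bi)
              = (eps R * γ) * ((eps R * β) * bi) := by ring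
            _ = (eps R * γ) * eps R := by rw [hbbi]
            _ = eps R * γ := fix_comm st hg

end KeyLemma

/-- over a dense nontrivial tangible supersemifield, `q` is quasilinear on
`Rx + Ry` iff `e·b(x,y)² ≤ e·q(x)q(y)`, and if `e·b(x,y)² > e·q(x)q(y)` then `q` is
rigid at `(x,y)`. -/
theorem stmt3 {R : Type*} [CommSemiring R] (hssf : IsSupersemifield R)
    (htan : TangibleSSF R) (hnt : NontrivialG R) (hdense : DenseR R)
    {V : Type*} [AddCommMonoid V] [Module R V] (q : V → R) (b : V → V → R)
    (hqb : IsQuadPair q b) (x y : V) :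
    (QuasilinearOn q (Submodule.span R {x, y}) ↔
      gle (eps R * (b x y) ^ 2) (eps R * (q x * q y))) ∧
    (glt (eps R * (q x * q y)) (eps R * (b x y) ^ 2) →
      ∀ b' : V → V → R, IsCompanion q b' → b' x y = b x y) := by
  have st := hssf.1
  obtain ⟨hsq, hbsym, hbadd, hbsmul, hbq⟩ := hqb
  have hbsmulr : ∀ (a : R) (u v : V), b u (a • v) = a * b u v := fun a u v => by
    rw [hbsym, hbsmul, hbsym]
  have qcomb : ∀ a c : R, q (a • x + c • y) =
      a ^ 2 * q x + c ^ 2 * q y + a * c * b x y := fun a c => by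
    rw [hbq, hsq, hsq, hbsmul, hbsmulr, ← mul_assoc]
  refine ⟨⟨fun hql => ?_, fun hCS => ?_⟩, fun hlt b' hb' => ?_⟩
  · -- quasilinear → gle
    by_contra hno
    have hlt := glt_of_not_gle st hno
    obtain ⟨a, hau, h1, h2⟩ := key hssf htan hnt hdense hlt
    have hx : x ∈ Submodule.span R {x, y} := Submodule.subset_span (Set.mem_insert _ _)
    have hy : a • y ∈ Submodule.span R {x, y} :=
      Submodule.smul_mem _ a (Submodule.subset_span (Set.mem_insert_iff.mpr (Or.inr rfl)))
    have heq := hql x hx (a • y) hy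
    have hcomp : q (x + a • y) = q x + a ^ 2 * q y + a * b x y := by
      rw [hbq, hsq, hbsmulr]
    rw [hcomp, hsq] at heq
    have hglez : eps R * (q x + a ^ 2 * q y) = eps R * q x + eps R * (a ^ 2 * q y) :=
      mul_add _ _ _
    have hne : eps R * (q x + a ^ 2 * q y) ≠ eps R * (a * b x y) := by
      rw [hglez]
      rcases bipot st (q x) (a ^ 2 * q y) with h | h <;> rw [h]
      · exact h1.2
      · exact h2.2
    have hle1 : gle (eps R * (q x + a ^ 2 * q y)) (eps R * (a * b x y)) := by
      rw [hglez]
      exact gle_add h1.1 h2.1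
    have hle2 : gle (eps R * (a * b x y)) (eps R * (q x + a ^ 2 * q y)) := by
      show eps R * (a * b x y) + eps R * (q x + a ^ 2 * q y) = eps R * (q x + a ^ 2 * q y)
      rw [← mul_add, add_comm (a * b x y) (q x + a ^ 2 * q y), heq]
    exact hne (gle_antisymm hle1 hle2)
  · -- gle → quasilinear
    intro u hu v hv
    obtain ⟨a₁, a₂, rfl⟩ := Submodule.mem_span_pair.mp hu
    obtain ⟨c₁, c₂, rfl⟩ := Submodule.mem_span_pair.mp hv
    have hsum : a₁ • x + a₂ • y + (c₁ • x + c₂ • y) = (a₁ + c₁) • x + (a₂ + c₂) • y := by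
      rw [add_smul, add_smul]; abel
    rw [hsum, qcomb, qcomb, qcomb]
    have hb1 : a₁ ^ 2 * q x + c₁ ^ 2 * q x + eps R * (a₁ * c₁ * q x)
        = a₁ ^ 2 * q x + c₁ ^ 2 * q x :=
      lemB_ghost hssf htan _ _ _ (gle_resp
        (show eps R * (a₁ ^ 2 * q x * (c₁ ^ 2 * q x))
            = eps R * (a₁ * c₁ * q x * (a₁ * c₁ * q x)) by ring)
        rfl (gle_refl_ghost st _))
    have hb2 : a₂ ^ 2 * q y + c₂ ^ 2 * q y + eps R * (a₂ * c₂ * q y)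
        = a₂ ^ 2 * q y + c₂ ^ 2 * q y :=
      lemB_ghost hssf htan _ _ _ (gle_resp
        (show eps R * (a₂ ^ 2 * q y * (c₂ ^ 2 * q y))
            = eps R * (a₂ * c₂ * q y * (a₂ * c₂ * q y)) by ring)
        rfl (gle_refl_ghost st _))
    have hb3 : a₁ ^ 2 * q x + c₂ ^ 2 * q y + a₁ * c₂ * b x y
        = a₁ ^ 2 * q x + c₂ ^ 2 * q y :=
      lemB hssf htan _ _ _ (gle_resp
        (show a₁ ^ 2 * c₂ ^ 2 * (eps R * (b x y) ^ 2)
            = eps R * (a₁ * c₂ * b x y * (a₁ * c₂ * b x y)) by ring)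
        (show a₁ ^ 2 * c₂ ^ 2 * (eps R * (q x * q y))
            = eps R * (a₁ ^ 2 * q x * (c₂ ^ 2 * q y)) by ring)
        (gle_mul (a₁ ^ 2 * c₂ ^ 2) hCS))
    have hb4 : a₂ ^ 2 * q y + c₁ ^ 2 * q x + a₂ * c₁ * b x y
        = a₂ ^ 2 * q y + c₁ ^ 2 * q x :=
      lemB hssf htan _ _ _ (gle_resp
        (show a₂ ^ 2 * c₁ ^ 2 * (eps R * (b x y) ^ 2)
            = eps R * (a₂ * c₁ * b x y * (a₂ * c₁ * b x y)) by ring)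
        (show a₂ ^ 2 * c₁ ^ 2 * (eps R * (q x * q y))
            = eps R * (a₂ ^ 2 * q y * (c₁ ^ 2 * q x)) by ring)
        (gle_mul (a₂ ^ 2 * c₁ ^ 2) hCS))
    have hstep1 : (a₁ ^ 2 * q x + c₁ ^ 2 * q x) + (a₂ ^ 2 * q y + c₂ ^ 2 * q y)
        + (a₁ * a₂ * b x y + c₁ * c₂ * b x y) + eps R * (a₁ * c₁ * q x)
        = (a₁ ^ 2 * q x + c₁ ^ 2 * q x) + (a₂ ^ 2 * q y + c₂ ^ 2 * q y)
        + (a₁ * a₂ * b x y + c₁ * c₂ * b x y) := by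
      calc _ = (a₂ ^ 2 * q y + c₂ ^ 2 * q y) + (a₁ * a₂ * b x y + c₁ * c₂ * b x y)
            + (a₁ ^ 2 * q x + c₁ ^ 2 * q x + eps R * (a₁ * c₁ * q x)) := by ring
        _ = (a₂ ^ 2 * q y + c₂ ^ 2 * q y) + (a₁ * a₂ * b x y + c₁ * c₂ * b x y)
            + (a₁ ^ 2 * q x + c₁ ^ 2 * q x) := by rw [hb1]
        _ = (a₁ ^ 2 * q x + c₁ ^ 2 * q x) + (a₂ ^ 2 * q y + c₂ ^ 2 * q y)
            + (a₁ * a₂ * b x y + c₁ * c₂ * b x y) := by ring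
    have hstep2 : (a₁ ^ 2 * q x + c₁ ^ 2 * q x) + (a₂ ^ 2 * q y + c₂ ^ 2 * q y)
        + (a₁ * a₂ * b x y + c₁ * c₂ * b x y) + eps R * (a₂ * c₂ * q y)
        = (a₁ ^ 2 * q x + c₁ ^ 2 * q x) + (a₂ ^ 2 * q y + c₂ ^ 2 * q y)
        + (a₁ * a₂ * b x y + c₁ * c₂ * b x y) := by
      calc _ = (a₁ ^ 2 * q x + c₁ ^ 2 * q x) + (a₁ * a₂ * b x y + c₁ * c₂ * b x y)
            + (a₂ ^ 2 * q y + c₂ ^ 2 * q y + eps R * (a₂ * c₂ * q y)) := by ring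
        _ = (a₁ ^ 2 * q x + c₁ ^ 2 * q x) + (a₁ * a₂ * b x y + c₁ * c₂ * b x y)
            + (a₂ ^ 2 * q y + c₂ ^ 2 * q y) := by rw [hb2]
        _ = (a₁ ^ 2 * q x + c₁ ^ 2 * q x) + (a₂ ^ 2 * q y + c₂ ^ 2 * q y)
            + (a₁ * a₂ * b x y + c₁ * c₂ * b x y) := by ring
    have hstep3 : (a₁ ^ 2 * q x + c₁ ^ 2 * q x) + (a₂ ^ 2 * q y + c₂ ^ 2 * q y)
        + (a₁ * a₂ * b x y + c₁ * c₂ * b x y) + a₁ * c₂ * b x y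
        = (a₁ ^ 2 * q x + c₁ ^ 2 * q x) + (a₂ ^ 2 * q y + c₂ ^ 2 * q y)
        + (a₁ * a₂ * b x y + c₁ * c₂ * b x y) := by
      calc _ = (c₁ ^ 2 * q x + a₂ ^ 2 * q y) + (a₁ * a₂ * b x y + c₁ * c₂ * b x y)
            + (a₁ ^ 2 * q x + c₂ ^ 2 * q y + a₁ * c₂ * b x y) := by ring
        _ = (c₁ ^ 2 * q x + a₂ ^ 2 * q y) + (a₁ * a₂ * b x y + c₁ * c₂ * b x y)
            + (a₁ ^ 2 * q x + c₂ ^ 2 * q y) := by rw [hb3]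
        _ = (a₁ ^ 2 * q x + c₁ ^ 2 * q x) + (a₂ ^ 2 * q y + c₂ ^ 2 * q y)
            + (a₁ * a₂ * b x y + c₁ * c₂ * b x y) := by ring
    have hstep4 : (a₁ ^ 2 * q x + c₁ ^ 2 * q x) + (a₂ ^ 2 * q y + c₂ ^ 2 * q y)
        + (a₁ * a₂ * b x y + c₁ * c₂ * b x y) + a₂ * c₁ * b x y
        = (a₁ ^ 2 * q x + c₁ ^ 2 * q x) + (a₂ ^ 2 * q y + c₂ ^ 2 * q y)
        + (a₁ * a₂ * b x y + c₁ * c₂ * b x y) := by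
      calc _ = (a₁ ^ 2 * q x + c₂ ^ 2 * q y) + (a₁ * a₂ * b x y + c₁ * c₂ * b x y)
            + (a₂ ^ 2 * q y + c₁ ^ 2 * q x + a₂ * c₁ * b x y) := by ring
        _ = (a₁ ^ 2 * q x + c₂ ^ 2 * q y) + (a₁ * a₂ * b x y + c₁ * c₂ * b x y)
            + (a₂ ^ 2 * q y + c₁ ^ 2 * q x) := by rw [hb4]
        _ = (a₁ ^ 2 * q x + c₁ ^ 2 * q x) + (a₂ ^ 2 * q y + c₂ ^ 2 * q y)
            + (a₁ * a₂ * b x y + c₁ * c₂ * b x y) := by ring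
    have hE : (eps R : R) = 1 + 1 := rfl
    calc (a₁ + c₁) ^ 2 * q x + (a₂ + c₂) ^ 2 * q y + (a₁ + c₁) * (a₂ + c₂) * b x y
        = (a₁ ^ 2 * q x + c₁ ^ 2 * q x) + (a₂ ^ 2 * q y + c₂ ^ 2 * q y)
            + (a₁ * a₂ * b x y + c₁ * c₂ * b x y)
            + eps R * (a₁ * c₁ * q x) + eps R * (a₂ * c₂ * q y)
            + a₁ * c₂ * b x y + a₂ * c₁ * b x y := by rw [hE]; ring
      _ = (a₁ ^ 2 * q x + c₁ ^ 2 * q x) + (a₂ ^ 2 * q y + c₂ ^ 2 * q y)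
            + (a₁ * a₂ * b x y + c₁ * c₂ * b x y)
            + eps R * (a₂ * c₂ * q y) + a₁ * c₂ * b x y + a₂ * c₁ * b x y := by
          rw [hstep1]
      _ = (a₁ ^ 2 * q x + c₁ ^ 2 * q x) + (a₂ ^ 2 * q y + c₂ ^ 2 * q y)
            + (a₁ * a₂ * b x y + c₁ * c₂ * b x y)
            + a₁ * c₂ * b x y + a₂ * c₁ * b x y := by rw [hstep2]
      _ = (a₁ ^ 2 * q x + c₁ ^ 2 * q x) + (a₂ ^ 2 * q y + c₂ ^ 2 * q y)
            + (a₁ * a₂ * b x y + c₁ * c₂ * b x y) + a₂ * c₁ * b x y := by rw [hstep3]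
      _ = (a₁ ^ 2 * q x + c₁ ^ 2 * q x) + (a₂ ^ 2 * q y + c₂ ^ 2 * q y)
            + (a₁ * a₂ * b x y + c₁ * c₂ * b x y) := by rw [hstep4]
      _ = a₁ ^ 2 * q x + a₂ ^ 2 * q y + a₁ * a₂ * b x y
            + (c₁ ^ 2 * q x + c₂ ^ 2 * q y + c₁ * c₂ * b x y) := by ring
  · -- rigidity
    obtain ⟨a, hau, h1, h2⟩ := key hssf htan hnt hdense hlt
    obtain ⟨hbsym', hbadd', hbsmul', hbq'⟩ := hb'
    have hbsmulr' : ∀ (a : R) (u v : V), b' u (a • v) = a * b' u v := fun a u v => by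
      rw [hbsym', hbsmul', hbsym']
    have hc1 : q (x + a • y) = q x + a ^ 2 * q y + a * b x y := by
      rw [hbq, hsq, hbsmulr]
    have hc2 : q (x + a • y) = q x + a ^ 2 * q y + a * b' x y := by
      rw [hbq', hsq, hbsmulr']
    have heq : q x + a ^ 2 * q y + a * b x y = q x + a ^ 2 * q y + a * b' x y := by
      rw [← hc1, hc2]
    have hglez : eps R * (q x + a ^ 2 * q y) = eps R * q x + eps R * (a ^ 2 * q y) :=
      mul_add _ _ _
    have hz_ne : eps R * (q x + a ^ 2 * q y) ≠ eps R * (a * b x y) := by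
      rw [hglez]
      rcases bipot st (q x) (a ^ 2 * q y) with h | h <;> rw [h]
      · exact h1.2
      · exact h2.2
    have hz_le : eps R * (q x + a ^ 2 * q y) + eps R * (a * b x y) = eps R * (a * b x y) := by
      rw [hglez]
      exact gle_add h1.1 h2.1
    have habs : q x + a ^ 2 * q y + a * b x y = a * b x y :=
      absorb_lt st hz_le hz_ne
    have hkey : a * b x y = q x + a ^ 2 * q y + a * b' x y := habs.symm.trans heq
    have hg2 : eps R * (a * b' x y) = eps R * (a * b x y) := by
      have h3 : eps R * (a * b x y)
          = eps R * (q x + a ^ 2 * q y) + eps R * (a * b' x y) := by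
        rw [← mul_add, ← hkey]
      rcases bipot st (q x + a ^ 2 * q y) (a * b' x y) with h | h
      · rw [h] at h3; exact absurd h3.symm hz_ne
      · rw [h] at h3; exact h3.symm
    have habs' : q x + a ^ 2 * q y + a * b' x y = a * b' x y := by
      apply absorb_lt st
      · rw [hg2]; exact hz_le
      · rw [hg2]; exact hz_ne
    exact (hau.mul_left_cancel (hkey.trans habs')).symm


end Supertrop
end

section
/- Let R be a supertropical semiring such that eR is a semifield (i.e. every element of eR \ {0} is invertible in eR with identity e). If a, b, c, d ∈ R satisfy e·b·c = e·a·d, then a·c + b·d = (a+b)·(c+d). -/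
open scoped Classical

namespace Supertrop

section Aux

variable {R : Type*} [CommSemiring R]

lemma eps_mul (x : R) : eps R * x = x + x := by unfold eps; ring

lemma cancel_ghost (hsf : GhostSemifield R) {γ u v : R} (hγ : γ ∈ eSet R) (hγ0 : γ ≠ 0)
    (hu : eps R * u = u) (hv : eps R * v = v) (huv : γ * u = γ * v) : u = v := by
  obtain ⟨-, -, hinv⟩ := hsf
  obtain ⟨w, -, hw⟩ := hinv γ ⟨hγ, hγ0⟩
  calc u = eps R * u := hu.symm
    _ = w * (γ * u) := by rw [← hw]; ring
    _ = w * (γ * v) := by rw [huv]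
    _ = eps R * v := by rw [← hw]; ring
    _ = v := hv

lemma ghost_bipotent (hR : IsSupertropical R) {u v : R} (hv : eps R * v = v) :
    u + v = u ∨ u + v = v := by
  obtain ⟨-, hax2, hax3⟩ := hR
  by_cases h : eps R * u = eps R * v
  · right; rw [hax3 u v h, hv]
  · exact hax2 u v h

/-- Key order lemma: if `β ≤ α` and `αβ = γ²` then `γ ≤ α`. -/
lemma compare (hsf : GhostSemifield R) {α β γ : R} (hα : eps R * α = α) (hγ : eps R * γ = γ)
    (hγset : γ ∈ eSet R) (hprod : α * β = γ * γ) (hβα : β + α = α)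
    (hbip : γ + α = γ ∨ γ + α = α) : γ + α = α := by
  rcases hbip with hcase | hcase
  · by_cases h0 : γ = 0
    · rw [h0, zero_add]
    · have hαγ : α + γ = γ := by rw [add_comm]; exact hcase
      have h1 : γ * γ + α * α = α * α := by
        calc γ * γ + α * α = (β + α) * α := by rw [← hprod]; ring
          _ = α * α := by rw [hβα]
      have h2 : α * α + γ * α = γ * α := by
        calc α * α + γ * α = (α + γ) * α := by ring
          _ = γ * α := by rw [hαγ]
      have h3 : γ * α + γ * γ = γ * γ := by
        calc γ * α + γ * γ = (α + γ) * γ := by ring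
          _ = γ * γ := by rw [hαγ]
      have h4 : γ * α + α * α = α * α := by
        calc γ * α + α * α = γ * α + (γ * γ + α * α) := by rw [h1]
          _ = (γ * α + γ * γ) + α * α := by ring
          _ = γ * γ + α * α := by rw [h3]
          _ = α * α := h1
      have h5 : γ * α = α * α := by
        calc γ * α = α * α + γ * α := h2.symm
          _ = γ * α + α * α := by ring
          _ = α * α := h4
      have h6 : γ * γ + γ * α = γ * α := by
        calc γ * γ + γ * α = γ * γ + α * α := by rw [h5]
          _ = α * α := h1
          _ = γ * α := h5.symm
      have h7 : γ * γ = γ * α := by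
        calc γ * γ = γ * α + γ * γ := h3.symm
          _ = γ * γ + γ * α := by ring
          _ = γ * α := h6
      have hγα : γ = α := cancel_ghost hsf hγset h0 hγ hα h7
      rw [hγα, ← eps_mul, hα]
  · exact hcase

lemma allEq (hsf : GhostSemifield R) {α β γ : R} (hα : eps R * α = α) (hβ : eps R * β = β)
    (hαset : α ∈ eSet R) (hβset : β ∈ eSet R) (hprod : α * β = γ * γ) (hsum : α + β = γ)
    (hbip : α + β = α ∨ α + β = β) : α = β ∧ β = γ := by
  rcases hbip with hcase | hcase
  · have hγα : γ = α := by rw [← hsum, hcase]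
    by_cases h0 : α = 0
    · have hβ0 : β = 0 := by
        have := hcase; rw [h0, zero_add] at this; exact this
      exact ⟨by rw [h0, hβ0], by rw [hβ0, hγα, h0]⟩
    · have hprod' : α * β = α * α := by rw [hprod, hγα]
      have hβα : β = α := cancel_ghost hsf hαset h0 hβ hα hprod'
      exact ⟨hβα.symm, by rw [hβα, hγα]⟩
  · have hγβ : γ = β := by rw [← hsum, hcase]
    by_cases h0 : β = 0
    · have hα0 : α = 0 := by
        have := hcase; rw [h0, add_zero] at this; exact this
      exact ⟨by rw [h0, hα0], hγβ.symm⟩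
    · have hprod' : β * α = β * β := by rw [mul_comm, hprod, hγβ]
      have hαβ : α = β := cancel_ghost hsf hβset h0 hα hβ hprod'
      exact ⟨hαβ, hγβ.symm⟩

end Aux

/-- if `e·bc = e·ad` then `ac + bd = (a+b)(c+d)`. -/
theorem stmt6 {R : Type*} [CommSemiring R] (hR : IsSupertropical R)
    (hsf : GhostSemifield R) (a b c d : R)
    (h : eps R * (b * c) = eps R * (a * d)) :
    a * c + b * d = (a + b) * (c + d) := by
  obtain ⟨he, hax2, hax3⟩ := hR
  have hee : eps R * eps R = eps R := by rw [eps_mul, he]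
  have hg : ∀ x : R, eps R * (eps R * x) = eps R * x := fun x => by rw [← mul_assoc, hee]
  set A := eps R * (a * c) with hA
  set B := eps R * (b * d) with hB
  set G := eps R * (a * d) with hG
  have hAg : eps R * A = A := hg _
  have hBg : eps R * B = B := hg _
  have hGg : eps R * G = G := hg _
  have hAset : A ∈ eSet R := ⟨a * c, rfl⟩
  have hBset : B ∈ eSet R := ⟨b * d, rfl⟩
  have hGset : G ∈ eSet R := ⟨a * d, rfl⟩
  have hprod : A * B = G * G := by
    calc A * B = (eps R * (a * d)) * (eps R * (b * c)) := by rw [hA, hB]; ring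
      _ = G * G := by rw [h, hG]
  have hes : eps R * (a * c + b * d) = A + B := by rw [mul_add, ← hA, ← hB]
  have het : eps R * (a * d + b * c) = G := by
    calc eps R * (a * d + b * c) = eps R * (a * d) + eps R * (b * c) := by rw [mul_add]
      _ = G + G := by rw [h, hG]
      _ = eps R * G := (eps_mul G).symm
      _ = G := hGg
  have hABbip : A + B = A ∨ A + B = B := by
    rcases ghost_bipotent ⟨he, hax2, hax3⟩ hBg (u := A) with h' | h'
    · exact Or.inl h'
    · exact Or.inr h'
  suffices hkey : (a * c + b * d) + (a * d + b * c) = a * c + b * d by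
    rw [← hkey]; ring
  by_cases hst : eps R * (a * c + b * d) = eps R * (a * d + b * c)
  · have hsum : A + B = G := by rw [← hes, ← het, hst]
    obtain ⟨hAB, hBG⟩ := allEq hsf hAg hBg hAset hBset hprod hsum hABbip
    have hs : a * c + b * d = B := by
      rw [hax3 (a * c) (b * d) hAB, ← hB]
    rw [hax3 _ _ hst, het, ← hBG, ← hs]
  · have hmax : G + (A + B) = A + B := by
      rcases hABbip with hcase | hcase
      · rw [hcase]
        exact compare hsf hAg hGg hGset hprod (by rw [add_comm]; exact hcase)
          (ghost_bipotent ⟨he, hax2, hax3⟩ hAg)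
      · rw [hcase]
        exact compare hsf hBg hGg hGset (by rw [mul_comm]; exact hprod) hcase
          (ghost_bipotent ⟨he, hax2, hax3⟩ hBg)
    rcases hax2 _ _ hst with h' | h'
    · exact h'
    · exfalso
      apply hst
      have hA2 : (A + B) + G = G := by
        calc (A + B) + G = eps R * (a * c + b * d) + eps R * (a * d + b * c) := by
              rw [hes, het]
          _ = eps R * ((a * c + b * d) + (a * d + b * c)) := (mul_add (eps R) (a * c + b * d) (a * d + b * c)).symm
          _ = eps R * (a * d + b * c) := by rw [h']
          _ = G := het
      rw [hes, het]
      calc A + B = G + (A + B) := hmax.symm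
        _ = (A + B) + G := by ring
        _ = G := hA2

end Supertrop
end
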